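/- arXiv:2202.02919 — 6 statements merged into one kernel-verified Lean document; each statement's English description precedes it below -/
import Mathlib

section
/- On the sphere of radius 1/√2 in ℝ³, if p and q are two points on the sphere that are not antipodal (q ≠ -p) and not equal, then there are at most 2 points on the sphere at Euclidean distance 1 from both p and q. -/
theorem at_most_two_common_neighbors_nonantipodal
    (p q : EuclideanSpace ℝ (Fin 3))
    (hp : ‖p‖ = 1 / Real.sqrt 2) (hq : ‖q‖ = 1 / Real.sqrt 2)
    (hne : q ≠ p) (hanti : q ≠ -p) :
    ∃ a b : EuclideanSpace ℝ (Fin 3),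
      {x : EuclideanSpace ℝ (Fin 3) |
        ‖x‖ = 1 / Real.sqrt 2 ∧ dist x p = 1 ∧ dist x q = 1} ⊆ {a, b} := by
  have hrpos : (0:ℝ) < 1 / Real.sqrt 2 := by positivity
  have hr2 : (1 / Real.sqrt 2) ^ 2 = 1 / 2 := by
    rw [div_pow, one_pow, Real.sq_sqrt (by norm_num : (0:ℝ) ≤ 2)]
  have hp0 : p ≠ 0 := by
    intro h; rw [h, norm_zero] at hp; exact absurd hp.symm (ne_of_gt hrpos)
  -- orthogonality from distance 1
  have key : ∀ z w : EuclideanSpace ℝ (Fin 3), ‖z‖ = 1 / Real.sqrt 2 →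
      ‖w‖ = 1 / Real.sqrt 2 → dist z w = 1 → inner ℝ w z = (0:ℝ) := by
    intro z w hz hw hd
    have h1 : ‖z - w‖ = 1 := by rwa [dist_eq_norm] at hd
    have h2 : ‖z - w‖ ^ 2 = ‖z‖ ^ 2 - 2 * inner ℝ z w + ‖w‖ ^ 2 := norm_sub_sq_real z w
    rw [h1, hz, hw, hr2] at h2
    have : inner ℝ z w = (0:ℝ) := by linarith
    rw [real_inner_comm] at this; exact this
  -- linear independence of p, q
  have hli : LinearIndependent ℝ ![p, q] := by
    rw [LinearIndependent.pair_iff' hp0]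
    intro a ha
    have hn : ‖q‖ = |a| * ‖p‖ := by rw [← ha, norm_smul]; simp
    rw [hp, hq] at hn
    have ha1 : |a| = 1 := by field_simp at hn; exact hn.symm
    rcases (abs_eq zero_le_one).mp ha1 with h1 | h1
    · rw [h1, one_smul] at ha; exact hne ha.symm
    · rw [h1, neg_one_smul] at ha; exact hanti ha.symm
  set K : Submodule ℝ (EuclideanSpace ℝ (Fin 3)) := (Submodule.span ℝ {p, q})ᗮ with hK
  have hspan2 : Module.finrank ℝ (Submodule.span ℝ ({p, q} : Set (EuclideanSpace ℝ (Fin 3)))) = 2 := by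
    have h := finrank_span_eq_card hli
    have hr : Set.range ![p, q] = {p, q} := by
      simp only [Matrix.range_cons, Matrix.range_empty, Set.union_empty, Set.union_singleton]
      exact Set.pair_comm q p
    rw [hr] at h
    simpa using h
  have hK1 : Module.finrank ℝ K = 1 := by
    have h := Submodule.finrank_add_finrank_orthogonal
      (Submodule.span ℝ ({p, q} : Set (EuclideanSpace ℝ (Fin 3))))
    rw [hspan2, finrank_euclideanSpace_fin, ← hK] at h
    omega
  have hmem : ∀ z : EuclideanSpace ℝ (Fin 3), inner ℝ p z = (0:ℝ) → inner ℝ q z = (0:ℝ) → z ∈ K := by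
    intro z h1 h2
    rw [hK, Submodule.mem_orthogonal]
    intro u hu
    induction hu using Submodule.span_induction with
    | mem u hu =>
      rcases hu with h | h
      · subst h; exact h1
      · subst h; exact h2
    | zero => exact inner_zero_left z
    | add u v _ _ hu hv => rw [inner_add_left, hu, hv]; ring
    | smul c u _ hu => rw [real_inner_smul_left, hu]; ring
  rcases Set.eq_empty_or_nonempty {x : EuclideanSpace ℝ (Fin 3) |
      ‖x‖ = 1 / Real.sqrt 2 ∧ dist x p = 1 ∧ dist x q = 1} with hS | ⟨x, hx⟩
  · exact ⟨0, 0, by rw [hS]; exact Set.empty_subset _⟩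
  obtain ⟨hxn, hxp, hxq⟩ := hx
  have hx0 : x ≠ 0 := by
    intro h; rw [h, norm_zero] at hxn; exact absurd hxn.symm (ne_of_gt hrpos)
  have hxK : x ∈ K := hmem x (key x p hxn hp hxp) (key x q hxn hq hxq)
  have hspanx : Submodule.span ℝ {x} = K := by
    apply Submodule.eq_of_le_of_finrank_le
    · rwa [Submodule.span_singleton_le_iff_mem]
    · rw [hK1, finrank_span_singleton hx0]
  refine ⟨x, -x, ?_⟩
  rintro y ⟨hyn, hyp, hyq⟩
  have hyK : y ∈ K := hmem y (key y p hyn hp hyp) (key y q hyn hq hyq)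
  rw [← hspanx, Submodule.mem_span_singleton] at hyK
  obtain ⟨c, hc⟩ := hyK
  have hn : ‖y‖ = |c| * ‖x‖ := by rw [← hc, norm_smul]; simp
  rw [hxn, hyn] at hn
  have hc1 : |c| = 1 := by field_simp at hn; exact hn.symm
  rcases (abs_eq zero_le_one).mp hc1 with h1 | h1
  · left; rw [← hc, h1, one_smul]
  · right; rw [← hc, h1, neg_one_smul]; rfl
end

section
/- In ℝ³, for any three points p₁, p₂, p₃ that do not all lie on a common line, there are at most 2 points at distance exactly 1 from each of p₁, p₂, p₃. More generally, for any three distinct points in ℝ³, if the set of points at unit distance from all three is infinite then p₁, p₂, p₃ are collinear. -/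
open EuclideanGeometry Affine AffineSubspace Module

lemma aux_subset_pair (p₁ p₂ p₃ : EuclideanSpace ℝ (Fin 3))
    (hnc : ¬ Collinear ℝ ({p₁, p₂, p₃} : Set (EuclideanSpace ℝ (Fin 3)))) :
    ∃ a b : EuclideanSpace ℝ (Fin 3),
      {x : EuclideanSpace ℝ (Fin 3) |
        dist x p₁ = 1 ∧ dist x p₂ = 1 ∧ dist x p₃ = 1} ⊆ {a, b} := by
  set S : Set (EuclideanSpace ℝ (Fin 3)) :=
    {x : EuclideanSpace ℝ (Fin 3) | dist x p₁ = 1 ∧ dist x p₂ = 1 ∧ dist x p₃ = 1} with hS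
  rcases S.eq_empty_or_nonempty with h | ⟨a, ha⟩
  · exact ⟨0, 0, by rw [h]; exact Set.empty_subset _⟩
  have hai : AffineIndependent ℝ ![p₁, p₂, p₃] :=
    affineIndependent_iff_not_collinear_set.2 hnc
  set t : Affine.Triangle ℝ (EuclideanSpace ℝ (Fin 3)) := ⟨![p₁, p₂, p₃], hai⟩ with ht
  set sp : AffineSubspace ℝ (EuclideanSpace ℝ (Fin 3)) :=
    affineSpan ℝ (Set.range t.points) with hsp
  have hdist : ∀ x ∈ S, ∀ i, dist (t.points i) x = 1 := by
    rintro x ⟨h1, h2, h3⟩ i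
    fin_cases i <;> rw [dist_comm] <;> first
      | simpa [ht] using h1 | simpa [ht] using h2 | simpa [ht] using h3
  have hp₀ : t.points 0 ∈ sp := mem_affineSpan ℝ (Set.mem_range_self _)
  refine ⟨a, EuclideanGeometry.reflection sp a, fun x hx => ?_⟩
  by_cases hxs : x ∈ sp
  · exact EuclideanGeometry.eq_or_eq_reflection_of_dist_eq
      (s := t) (p := a) (p₁ := x) (p₂ := a) (r := 1)
      ((affineSpan_mono ℝ (Set.subset_insert _ _)) hxs)
      (mem_affineSpan ℝ (Set.mem_insert _ _)) (hdist x hx) (hdist a ha)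
  · have hamem : a ∈ affineSpan ℝ (insert x (Set.range t.points)) := by
      have hrw : affineSpan ℝ (insert x (Set.range t.points)) =
          affineSpan ℝ (insert x (sp : Set (EuclideanSpace ℝ (Fin 3)))) := by
        rw [hsp, affineSpan_insert_affineSpan]
      have hdir : (affineSpan ℝ (insert x (sp : Set (EuclideanSpace ℝ (Fin 3))))).direction =
          Submodule.span ℝ {x -ᵥ t.points 0} ⊔ sp.direction :=
        direction_affineSpan_insert hp₀
      have hlt : sp.direction < (affineSpan ℝ
          (insert x (sp : Set (EuclideanSpace ℝ (Fin 3))))).direction := by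
        rw [hdir]
        refine lt_of_le_of_ne le_sup_right fun he => hxs ?_
        have hv : x -ᵥ t.points 0 ∈ sp.direction := by
          rw [he]
          exact Submodule.mem_sup_left (Submodule.mem_span_singleton_self _)
        simpa using vadd_mem_of_mem_direction hv hp₀
      have hfr2 : finrank ℝ sp.direction = 2 := by
        rw [hsp, direction_affineSpan]
        simpa using hai.finrank_vectorSpan (by simp)
      have hfr3 : finrank ℝ (EuclideanSpace ℝ (Fin 3)) = 3 := by
        simp [finrank_euclideanSpace_fin]
      have hge : 3 ≤ finrank ℝ (affineSpan ℝ
          (insert x (sp : Set (EuclideanSpace ℝ (Fin 3))))).direction := by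
        have := Submodule.finrank_lt_finrank_of_lt hlt
        omega
      have htop : (affineSpan ℝ
          (insert x (sp : Set (EuclideanSpace ℝ (Fin 3))))).direction = ⊤ := by
        apply Submodule.eq_top_of_finrank_eq
        have hle := Submodule.finrank_le (affineSpan ℝ
          (insert x (sp : Set (EuclideanSpace ℝ (Fin 3))))).direction
        omega
      rw [hrw]
      have hp₀' : t.points 0 ∈ affineSpan ℝ (insert x (sp : Set (EuclideanSpace ℝ (Fin 3)))) :=
        mem_affineSpan ℝ (Set.mem_insert_of_mem _ hp₀)
      have : a = (a -ᵥ t.points 0) +ᵥ t.points 0 := (vsub_vadd _ _).symm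
      rw [this]
      exact vadd_mem_of_mem_direction (by rw [htop]; trivial) hp₀'
    exact EuclideanGeometry.eq_or_eq_reflection_of_dist_eq
      (s := t) (p := x) (p₁ := x) (p₂ := a) (r := 1)
      (mem_affineSpan ℝ (Set.mem_insert _ _)) hamem (hdist x hx) (hdist a ha)

theorem common_unit_neighbors_in_space
    (p₁ p₂ p₃ : EuclideanSpace ℝ (Fin 3)) :
    (¬ Collinear ℝ ({p₁, p₂, p₃} : Set (EuclideanSpace ℝ (Fin 3))) →
      ∃ a b : EuclideanSpace ℝ (Fin 3),
        {x : EuclideanSpace ℝ (Fin 3) |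
          dist x p₁ = 1 ∧ dist x p₂ = 1 ∧ dist x p₃ = 1} ⊆ {a, b}) ∧
    (p₁ ≠ p₂ → p₁ ≠ p₃ → p₂ ≠ p₃ →
      {x : EuclideanSpace ℝ (Fin 3) |
        dist x p₁ = 1 ∧ dist x p₂ = 1 ∧ dist x p₃ = 1}.Infinite →
      Collinear ℝ ({p₁, p₂, p₃} : Set (EuclideanSpace ℝ (Fin 3)))) := by
  refine ⟨aux_subset_pair p₁ p₂ p₃, fun _ _ _ hinf => ?_⟩
  by_contra hnc
  obtain ⟨a, b, hab⟩ := aux_subset_pair p₁ p₂ p₃ hnc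
  exact hinf (((Set.finite_singleton b).insert a).subset hab)
end

section
/- Let P be a set of n points on the sphere of radius 1/√2 in ℝ³. The number of 3-tuples (p₁, p₂, p₃) of distinct points of P with ‖p₁ - p₂‖ = ‖p₂ - p₃‖ = 1 is at most C·n² for an absolute constant C (in fact C = 2 works for the count of such paths with p₁ ≠ p₃, plus n² for antipodal end pairs). -/
open Finset Module Submodule RealInnerProductSpace

lemma middle_two {a c : EuclideanSpace ℝ (Fin 3)} {r : ℝ} (hr : 0 < r)
    (ha : ‖a‖ = r) (hc : ‖c‖ = r) (hac : a ≠ c) (hac' : c ≠ -a) :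
    ∃ w₁ w₂ : EuclideanSpace ℝ (Fin 3), ∀ b : EuclideanSpace ℝ (Fin 3),
      (inner ℝ a b : ℝ) = 0 → (inner ℝ c b : ℝ) = 0 → ‖b‖ = r → b = w₁ ∨ b = w₂ := by
  have hcne : c ≠ 0 := by intro h; rw [h, norm_zero] at hc; linarith
  have hli : LinearIndependent ℝ ![a, c] := by
    rw [linearIndependent_fin2]
    refine ⟨by simpa using hcne, fun t h => ?_⟩
    simp only [Matrix.cons_val_one, Matrix.head_cons, Matrix.cons_val_zero] at h
    have hn : |t| * r = r := by
      rw [← hc, ← Real.norm_eq_abs, ← norm_smul, h, ha, hc]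
    have ht : |t| = 1 := by
      have := mul_right_cancel₀ hr.ne' (by rw [hn, one_mul] : |t| * r = 1 * r); exact this
    rcases (abs_eq (by norm_num : (0:ℝ) ≤ 1)).1 ht with h1 | h1
    · rw [h1, one_smul] at h; exact hac h.symm
    · rw [h1, neg_one_smul] at h; exact hac' (by rw [← h]; simp)
  set W : Submodule ℝ (EuclideanSpace ℝ (Fin 3)) := Submodule.span ℝ {a, c} with hW
  have hrange : Set.range ![a, c] = {a, c} := by
    simp [Matrix.range_cons, Matrix.range_empty, Set.pair_comm]
  have hWfin : Module.finrank ℝ W = 2 := by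
    rw [hW, ← hrange, finrank_span_eq_card hli]; simp
  have hKfin : Module.finrank ℝ Wᗮ = 1 := by
    have := W.finrank_add_finrank_orthogonal
    rw [hWfin, finrank_euclideanSpace_fin] at this
    omega
  obtain ⟨v, hv0, hv⟩ := finrank_eq_one_iff'.1 hKfin
  have hvne : (v : EuclideanSpace ℝ (Fin 3)) ≠ 0 := by
    simpa [Submodule.coe_eq_zero] using hv0
  have hvnorm : (0:ℝ) < ‖(v : EuclideanSpace ℝ (Fin 3))‖ := norm_pos_iff.2 hvne
  set s : ℝ := r / ‖(v : EuclideanSpace ℝ (Fin 3))‖ with hs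
  refine ⟨s • (v : EuclideanSpace ℝ (Fin 3)), -(s • (v : EuclideanSpace ℝ (Fin 3))), fun b h1 h2 h3 => ?_⟩
  have hbW : b ∈ Wᗮ := by
    have hle : W ≤ (ℝ ∙ b)ᗮ := by
      rw [hW, Submodule.span_le]
      rintro x (rfl | rfl)
      · exact Submodule.mem_orthogonal_singleton_iff_inner_left.2 h1
      · exact Submodule.mem_orthogonal_singleton_iff_inner_left.2 h2
    have := Submodule.orthogonal_le hle
    exact this ((ℝ ∙ b).le_orthogonal_orthogonal (Submodule.mem_span_singleton_self b))
  obtain ⟨t, ht⟩ := hv ⟨b, hbW⟩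
  have htb : t • (v : EuclideanSpace ℝ (Fin 3)) = b := congrArg Subtype.val ht
  have hnt : |t| * ‖(v : EuclideanSpace ℝ (Fin 3))‖ = r := by
    rw [← Real.norm_eq_abs, ← norm_smul, htb, h3]
  have hts : |t| = s := by rw [hs]; field_simp at hnt ⊢; linarith
  rcases (abs_eq (by positivity : (0:ℝ) ≤ s)).1 hts with h1 | h1
  · left; rw [← htb, h1]
  · right; rw [← htb, h1, neg_smul]

theorem three_paths_on_sphere_quadratic :
    ∃ C : ℝ, 0 < C ∧
      ∀ (n : ℕ) (P : Finset (EuclideanSpace ℝ (Fin 3))),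
        (∀ x ∈ P, ‖x‖ = 1 / Real.sqrt 2) → P.card = n →
        ({t : EuclideanSpace ℝ (Fin 3) × EuclideanSpace ℝ (Fin 3) ×
            EuclideanSpace ℝ (Fin 3) |
          t.1 ∈ P ∧ t.2.1 ∈ P ∧ t.2.2 ∈ P ∧
          t.1 ≠ t.2.1 ∧ t.1 ≠ t.2.2 ∧ t.2.1 ≠ t.2.2 ∧
          dist t.1 t.2.1 = 1 ∧ dist t.2.1 t.2.2 = 1}.ncard : ℝ) ≤ C * n ^ 2 := by
  classical
  refine ⟨3, by norm_num, fun n P hP hcard => ?_⟩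
  set r : ℝ := 1 / Real.sqrt 2 with hrdef
  have hr0 : 0 < r := by rw [hrdef]; positivity
  have hinner : ∀ x ∈ P, ∀ y ∈ P, dist x y = 1 → (inner ℝ x y : ℝ) = 0 := by
    intro x hx y hy hd
    have hx2 : ‖x‖ ^ 2 = 1 / 2 := by
      rw [hP x hx, div_pow, one_pow, Real.sq_sqrt (by norm_num : (2:ℝ) ≥ 0)]
    have hy2 : ‖y‖ ^ 2 = 1 / 2 := by
      rw [hP y hy, div_pow, one_pow, Real.sq_sqrt (by norm_num : (2:ℝ) ≥ 0)]
    have hxy : ‖x - y‖ ^ 2 = 1 := by rw [← dist_eq_norm, hd]; norm_num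
    rw [norm_sub_sq_real] at hxy
    linarith
  set T : Finset (EuclideanSpace ℝ (Fin 3) × EuclideanSpace ℝ (Fin 3) ×
      EuclideanSpace ℝ (Fin 3)) :=
    (P ×ˢ P ×ˢ P).filter (fun t => t.1 ≠ t.2.1 ∧ t.1 ≠ t.2.2 ∧ t.2.1 ≠ t.2.2 ∧
      dist t.1 t.2.1 = 1 ∧ dist t.2.1 t.2.2 = 1) with hT
  have hset : {t : EuclideanSpace ℝ (Fin 3) × EuclideanSpace ℝ (Fin 3) ×
            EuclideanSpace ℝ (Fin 3) |
          t.1 ∈ P ∧ t.2.1 ∈ P ∧ t.2.2 ∈ P ∧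
          t.1 ≠ t.2.1 ∧ t.1 ≠ t.2.2 ∧ t.2.1 ≠ t.2.2 ∧
          dist t.1 t.2.1 = 1 ∧ dist t.2.1 t.2.2 = 1} = ↑T := by
    ext t
    simp only [hT, Set.mem_setOf_eq, Finset.coe_filter, Finset.mem_product]
    tauto
  rw [hset, Set.ncard_coe_finset]
  suffices h : T.card ≤ 3 * n ^ 2 by
    calc (T.card : ℝ) ≤ ((3 * n ^ 2 : ℕ) : ℝ) := Nat.cast_le.2 h
      _ = 3 * (n : ℝ) ^ 2 := by push_cast; ring
  have hmap : ∀ t ∈ T, (t.1, t.2.2) ∈ P ×ˢ P := by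
    intro t ht
    rw [hT, Finset.mem_filter, Finset.mem_product, Finset.mem_product] at ht
    exact Finset.mem_product.2 ⟨ht.1.1, ht.1.2.2⟩
  rw [Finset.card_eq_sum_card_fiberwise hmap]
  have hfib : ∀ p ∈ P ×ˢ P,
      (T.filter (fun t => (t.1, t.2.2) = p)).card ≤ if p.2 = -p.1 then n else 2 := by
    rintro ⟨a, c⟩ hp
    rw [Finset.mem_product] at hp
    have hmem : ∀ t ∈ T.filter (fun t => (t.1, t.2.2) = (a, c)),
        t.1 = a ∧ t.2.2 = c ∧ t.1 ∈ P ∧ t.2.1 ∈ P ∧ t.2.2 ∈ P ∧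
        t.1 ≠ t.2.1 ∧ t.1 ≠ t.2.2 ∧ t.2.1 ≠ t.2.2 ∧
        dist t.1 t.2.1 = 1 ∧ dist t.2.1 t.2.2 = 1 := by
      intro t ht
      rw [Finset.mem_filter, hT, Finset.mem_filter, Finset.mem_product,
        Finset.mem_product] at ht
      obtain ⟨⟨⟨h1, h2, h3⟩, h4⟩, h5⟩ := ht
      exact ⟨congrArg Prod.fst h5, congrArg Prod.snd h5, h1, h2, h3, h4.1, h4.2.1,
        h4.2.2.1, h4.2.2.2.1, h4.2.2.2.2⟩
    have hinj : Set.InjOn (fun t : EuclideanSpace ℝ (Fin 3) × EuclideanSpace ℝ (Fin 3) × EuclideanSpace ℝ (Fin 3) => t.2.1)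
        ↑(T.filter (fun t => (t.1, t.2.2) = (a, c))) := by
      intro t ht t' ht' he
      obtain ⟨e1, e2, _⟩ := hmem t (by exact_mod_cast ht)
      obtain ⟨e1', e2', _⟩ := hmem t' (by exact_mod_cast ht')
      exact Prod.ext (e1.trans e1'.symm) (Prod.ext he (e2.trans e2'.symm))
    by_cases hpc : c = -a
    · rw [if_pos hpc]
      rw [← hcard]
      exact Finset.card_le_card_of_injOn (fun t => t.2.1)
        (fun t ht => (hmem t ht).2.2.2.1) hinj
    · rw [if_neg hpc]
      rcases Finset.eq_empty_or_nonempty (T.filter (fun t => (t.1, t.2.2) = (a, c)))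
        with he | ⟨t0, ht0⟩
      · rw [he]; simp
      obtain ⟨e1, e2, hP1, _, hP3, _, hne, _, _, _⟩ := hmem t0 ht0
      have ha : ‖a‖ = r := hP a (e1 ▸ hP1)
      have hc : ‖c‖ = r := hP c (e2 ▸ hP3)
      have hac : a ≠ c := by rw [← e1, ← e2]; exact hne
      obtain ⟨w₁, w₂, hw⟩ := middle_two hr0 ha hc hac hpc
      have hsub : ∀ t ∈ T.filter (fun t => (t.1, t.2.2) = (a, c)),
          (fun t : EuclideanSpace ℝ (Fin 3) × EuclideanSpace ℝ (Fin 3) ×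
            EuclideanSpace ℝ (Fin 3) => t.2.1) t ∈ ({w₁, w₂} : Finset _) := by
        intro t ht
        obtain ⟨f1, f2, g1, g2, g3, _, _, _, d1, d2⟩ := hmem t ht
        have i1 : (inner ℝ a t.2.1 : ℝ) = 0 := f1 ▸ hinner t.1 g1 t.2.1 g2 d1
        have i2 : (inner ℝ c t.2.1 : ℝ) = 0 := by
          have h0 := hinner t.2.1 g2 t.2.2 g3 d2
          rw [f2] at h0
          rwa [real_inner_comm]
        have hb : ‖t.2.1‖ = r := hP _ g2
        rcases hw t.2.1 i1 i2 hb with h | h <;> simp [h]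
      refine le_trans (Finset.card_le_card_of_injOn _ hsub hinj) ?_
      exact (Finset.card_insert_le _ _).trans (by simp)
  calc ∑ p ∈ P ×ˢ P, (T.filter (fun t => (t.1, t.2.2) = p)).card
      ≤ ∑ p ∈ P ×ˢ P, (if p.2 = -p.1 then n else 2) := Finset.sum_le_sum hfib
    _ = ∑ p ∈ (P ×ˢ P).filter (fun p => p.2 = -p.1), n +
        ∑ p ∈ (P ×ˢ P).filter (fun p => ¬p.2 = -p.1), 2 := Finset.sum_ite _ _
    _ = ((P ×ˢ P).filter (fun p => p.2 = -p.1)).card * n +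
        ((P ×ˢ P).filter (fun p => ¬p.2 = -p.1)).card * 2 := by
        rw [Finset.sum_const, Finset.sum_const, smul_eq_mul, smul_eq_mul]
    _ ≤ n * n + (n * n) * 2 := by
        have h1 : ((P ×ˢ P).filter (fun p => p.2 = -p.1)).card ≤ n := by
          rw [← hcard]
          refine Finset.card_le_card_of_injOn (fun p => p.1)
            (fun p hp => (Finset.mem_product.1 (Finset.mem_filter.1 hp).1).1) ?_
          intro p hp q hq he
          simp only [Finset.coe_filter, Set.mem_setOf_eq] at hp hq
          simp only at he
          exact Prod.ext he (by rw [hp.2, hq.2, he])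
        have h2 : ((P ×ˢ P).filter (fun p => ¬p.2 = -p.1)).card ≤ n * n := by
          calc ((P ×ˢ P).filter (fun p => ¬p.2 = -p.1)).card ≤ (P ×ˢ P).card :=
                Finset.card_filter_le _ _
            _ = n * n := by rw [Finset.card_product, hcard]
        nlinarith
    _ ≤ 3 * n ^ 2 := by ring_nf; omega
end

section
/- Suppose for all n the maximum number of unit-distance pairs among any n points on the sphere of radius 1/√2 is at most A·n^{4/3}. Then the number of 4-tuples (p₁, p₂, p₃, p₄) of distinct points of an n-point set P on this sphere forming a unit-distance 4-cycle (‖p₁-p₂‖ = ‖p₂-p₃‖ = ‖p₃-p₄‖ = ‖p₄-p₁‖ = 1) is at most C·n² for a constant C depending only on A. -/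
open RealInnerProductSpace Submodule

local notation "E3" => EuclideanSpace ℝ (Fin 3)

lemma FC_rpos : (0:ℝ) < 1 / Real.sqrt 2 := by positivity

lemma FC_norm_eq_abs_one {c : ℝ} (h : (1 / Real.sqrt 2 : ℝ) = |c| * (1 / Real.sqrt 2)) :
    c = 1 ∨ c = -1 := by
  have habs : |c| = 1 := by
    have := FC_rpos
    nlinarith [h]
  exact (abs_eq (by norm_num : (0:ℝ) ≤ 1)).mp habs

lemma dist_iff_inner' {u v : E3} (hu : ‖u‖ = 1 / Real.sqrt 2) (hv : ‖v‖ = 1 / Real.sqrt 2) :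
    dist u v = 1 ↔ ⟪u, v⟫ = 0 := by
  have h2 : ‖u‖ ^ 2 = 1/2 := by
    rw [hu, div_pow, one_pow, Real.sq_sqrt (by norm_num : (0:ℝ) ≤ 2)]
  have h3 : ‖v‖ ^ 2 = 1/2 := by
    rw [hv, div_pow, one_pow, Real.sq_sqrt (by norm_num : (0:ℝ) ≤ 2)]
  have hsq : ‖u - v‖ ^ 2 = 1 - 2 * ⟪u, v⟫ := by
    rw [norm_sub_sq_real, h2, h3]; ring
  rw [dist_eq_norm]
  constructor
  · intro h; rw [h] at hsq; nlinarith [hsq]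
  · intro h
    have : ‖u - v‖ ^ 2 = 1 := by rw [hsq, h]; ring
    nlinarith [norm_nonneg (u - v)]

lemma pair_lemma' {u v a b : E3} (hu : ‖u‖ = 1 / Real.sqrt 2) (hv : ‖v‖ = 1 / Real.sqrt 2)
    (hvu : v ≠ u) (hvnu : v ≠ -u)
    (ha : ‖a‖ = 1 / Real.sqrt 2) (hua : ⟪u, a⟫ = 0) (hva : ⟪v, a⟫ = 0)
    (hb : ‖b‖ = 1 / Real.sqrt 2) (hub : ⟪u, b⟫ = 0) (hvb : ⟪v, b⟫ = 0) :
    b = a ∨ b = -a := by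
  have hune : u ≠ 0 := by intro h; rw [h, norm_zero] at hu; exact absurd hu.symm (ne_of_gt FC_rpos)
  have hli : LinearIndependent ℝ ![v, u] := by
    rw [linearIndependent_fin2]
    simp only [Matrix.cons_val_zero, Matrix.cons_val_one, Matrix.head_cons]
    refine ⟨hune, fun c hc => ?_⟩
    have hn : ‖v‖ = |c| * ‖u‖ := by rw [← hc, norm_smul, Real.norm_eq_abs]
    rw [hu, hv] at hn
    rcases FC_norm_eq_abs_one hn with h | h
    · rw [h, one_smul] at hc; exact hvu hc.symm
    · rw [h, neg_one_smul] at hc; exact hvnu hc.symm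
  set W : Submodule ℝ E3 := Submodule.span ℝ (Set.range ![v, u]) with hW
  have hrange : Set.range ![v, u] = {v, u} := by
    simp [Matrix.range_cons, Matrix.range_empty, Set.insert_def]
    exact Set.ext fun y => or_comm
  have hmem : ∀ x : E3, ⟪u, x⟫ = 0 → ⟪v, x⟫ = 0 → x ∈ Wᗮ := by
    intro x hux hvx
    rw [Submodule.mem_orthogonal]
    intro y hy
    rw [hW, hrange] at hy
    rcases Submodule.mem_span_pair.mp hy with ⟨s, t, rfl⟩
    rw [inner_add_left, real_inner_smul_left, real_inner_smul_left, hux, hvx]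
    ring
  have haW : a ∈ Wᗮ := hmem a hua hva
  have hbW : b ∈ Wᗮ := hmem b hub hvb
  have hfr : Module.finrank ℝ Wᗮ = 1 := by
    have h1 : Module.finrank ℝ W = 2 := by
      rw [hW, finrank_span_eq_card hli]; simp
    have h2 := W.finrank_add_finrank_orthogonal
    rw [h1, finrank_euclideanSpace_fin] at h2
    omega
  have hane : a ≠ 0 := by intro h; rw [h, norm_zero] at ha; exact absurd ha.symm (ne_of_gt FC_rpos)
  obtain ⟨c, hc⟩ := (finrank_eq_one_iff_of_nonzero' (⟨a, haW⟩ : Wᗮ)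
    (by simpa using hane)).mp hfr ⟨b, hbW⟩
  have hc' : c • a = b := congrArg Subtype.val hc
  have hn : ‖b‖ = |c| * ‖a‖ := by rw [← hc', norm_smul, Real.norm_eq_abs]
  rw [ha, hb] at hn
  rcases FC_norm_eq_abs_one hn with h | h
  · left; rw [h, one_smul] at hc'; exact hc'.symm
  · right; rw [h, neg_one_smul] at hc'; exact hc'.symm

theorem four_cycles_on_sphere_quadratic
    (A : ℝ)
    (hST : ∀ Q : Finset (EuclideanSpace ℝ (Fin 3)),
      (∀ x ∈ Q, ‖x‖ = 1 / Real.sqrt 2) →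
      ({e : EuclideanSpace ℝ (Fin 3) × EuclideanSpace ℝ (Fin 3) |
          e.1 ∈ Q ∧ e.2 ∈ Q ∧ dist e.1 e.2 = 1}.ncard : ℝ) ≤
        A * (Q.card : ℝ) ^ (4 / 3 : ℝ)) :
    ∃ C : ℝ, ∀ (n : ℕ) (P : Finset (EuclideanSpace ℝ (Fin 3))),
      (∀ x ∈ P, ‖x‖ = 1 / Real.sqrt 2) → P.card = n →
      ({t : EuclideanSpace ℝ (Fin 3) × EuclideanSpace ℝ (Fin 3) ×
          EuclideanSpace ℝ (Fin 3) × EuclideanSpace ℝ (Fin 3) |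
        t.1 ∈ P ∧ t.2.1 ∈ P ∧ t.2.2.1 ∈ P ∧ t.2.2.2 ∈ P ∧
        t.1 ≠ t.2.1 ∧ t.1 ≠ t.2.2.1 ∧ t.1 ≠ t.2.2.2 ∧
        t.2.1 ≠ t.2.2.1 ∧ t.2.1 ≠ t.2.2.2 ∧ t.2.2.1 ≠ t.2.2.2 ∧
        dist t.1 t.2.1 = 1 ∧ dist t.2.1 t.2.2.1 = 1 ∧
        dist t.2.2.1 t.2.2.2 = 1 ∧ dist t.2.2.2 t.1 = 1}.ncard : ℝ) ≤
        C * (n : ℝ) ^ 2 := by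
  classical
  refine ⟨7, ?_⟩
  intro n P hP hn
  set pred : E3 × E3 × E3 × E3 → Prop := fun t =>
    t.1 ∈ P ∧ t.2.1 ∈ P ∧ t.2.2.1 ∈ P ∧ t.2.2.2 ∈ P ∧
      t.1 ≠ t.2.1 ∧ t.1 ≠ t.2.2.1 ∧ t.1 ≠ t.2.2.2 ∧
      t.2.1 ≠ t.2.2.1 ∧ t.2.1 ≠ t.2.2.2 ∧ t.2.2.1 ≠ t.2.2.2 ∧
      dist t.1 t.2.1 = 1 ∧ dist t.2.1 t.2.2.1 = 1 ∧
      dist t.2.2.1 t.2.2.2 = 1 ∧ dist t.2.2.2 t.1 = 1 with hpred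
  set F : Finset (E3 × E3 × E3 × E3) := (P ×ˢ P ×ˢ P ×ˢ P).filter pred with hF
  have hset : {t : E3 × E3 × E3 × E3 | pred t} = (F : Set (E3 × E3 × E3 × E3)) := by
    ext t
    simp only [hF, Finset.coe_filter, Set.mem_setOf_eq, Finset.mem_product, hpred]
    tauto
  rw [hset, Set.ncard_coe_finset]
  -- key fiber machinery
  have key : ∀ t ∈ F, pred t := fun t ht => (Finset.mem_filter.mp ht).2
  set F1 := F.filter (fun t => t.2.2.1 ≠ -t.1) with hF1
  set F2 := F.filter (fun t => t.2.2.1 = -t.1 ∧ t.2.2.2 ≠ -t.2.1) with hF2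
  set F3 := F.filter (fun t => t.2.2.1 = -t.1 ∧ t.2.2.2 = -t.2.1) with hF3
  have hsub : F ⊆ F1 ∪ F2 ∪ F3 := by
    intro t ht
    simp only [Finset.mem_union, hF1, hF2, hF3, Finset.mem_filter]
    by_cases h1 : t.2.2.1 = -t.1
    · by_cases h2 : t.2.2.2 = -t.2.1
      · exact Or.inr ⟨ht, h1, h2⟩
      · exact Or.inl (Or.inr ⟨ht, h1, h2⟩)
    · exact Or.inl (Or.inl ⟨ht, h1⟩)
  have hcards : F.card ≤ F1.card + F2.card + F3.card :=
    le_trans (Finset.card_le_card hsub)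
      (le_trans (Finset.card_union_le _ _) (by gcongr; exact Finset.card_union_le _ _))
  -- F3 bound
  have h3 : F3.card ≤ n ^ 2 := by
    have : F3.card ≤ (P ×ˢ P).card := by
      apply Finset.card_le_card_of_injOn (fun t => (t.1, t.2.1))
      · intro t ht
        have hp := key t (Finset.mem_filter.mp ht).1
        exact Finset.mem_product.mpr ⟨hp.1, hp.2.1⟩
      · intro t ht t' ht' h
        obtain ⟨-, c1, c2⟩ := Finset.mem_filter.mp ht
        obtain ⟨-, c1', c2'⟩ := Finset.mem_filter.mp ht'
        obtain ⟨e1, e2⟩ := Prod.ext_iff.mp h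
        simp only at e1 e2
        have e3 : t.2.2.1 = t'.2.2.1 := by rw [c1, c1', e1]
        have e4 : t.2.2.2 = t'.2.2.2 := by rw [c2, c2', e2]
        exact Prod.ext e1 (Prod.ext e2 (Prod.ext e3 e4))
    simpa [Finset.card_product, hn, sq] using this
  -- F1 bound
  have h1 : F1.card ≤ 4 * n ^ 2 := by
    have : F1.card ≤ 4 * (P ×ˢ P).card := by
      apply Finset.card_le_mul_card_image_of_maps_to (f := fun t => (t.1, t.2.2.1))
      · intro t ht
        have hp := key t (Finset.mem_filter.mp ht).1
        exact Finset.mem_product.mpr ⟨hp.1, hp.2.2.1⟩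
      · rintro ⟨p, q⟩ -
        set G := F1.filter (fun t => (t.1, t.2.2.1) = (p, q)) with hG
        rcases Finset.eq_empty_or_nonempty G with he | ⟨t0, ht0⟩
        · simp [he]
        -- facts about elements of G
        have fact : ∀ t ∈ G, t.1 = p ∧ t.2.2.1 = q ∧
            (‖t.2.1‖ = 1 / Real.sqrt 2 ∧ ⟪p, t.2.1⟫ = 0 ∧ ⟪q, t.2.1⟫ = 0) ∧
            (‖t.2.2.2‖ = 1 / Real.sqrt 2 ∧ ⟪p, t.2.2.2⟫ = 0 ∧ ⟪q, t.2.2.2⟫ = 0) ∧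
            q ≠ p ∧ q ≠ -p := by
          intro t ht
          obtain ⟨ht1, heq⟩ := Finset.mem_filter.mp ht
          obtain ⟨htF, hne⟩ := Finset.mem_filter.mp ht1
          obtain ⟨m1, m2, m3, m4, d12, d13, d14, d23, d24, d34, u12, u23, u34, u41⟩ := key t htF
          have e1 : t.1 = p := congrArg Prod.fst heq
          have e3 : t.2.2.1 = q := congrArg (fun r => r.2) heq
          have n1 := hP _ m1; have n2 := hP _ m2; have n3 := hP _ m3; have n4 := hP _ m4
          rw [e1] at n1; rw [e3] at n3
          refine ⟨e1, e3, ⟨n2, ?_, ?_⟩, ⟨n4, ?_, ?_⟩, by rw [← e1, ← e3]; exact d13.symm,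
            by rw [← e1, ← e3]; exact hne⟩
          · exact (dist_iff_inner' n1 n2).mp (by rw [← e1]; exact u12)
          · rw [real_inner_comm]
            exact (dist_iff_inner' n2 n3).mp (by rw [← e3]; exact u23)
          · rw [real_inner_comm]
            exact (dist_iff_inner' n4 n1).mp (by rw [← e1]; exact u41)
          · exact (dist_iff_inner' n3 n4).mp (by rw [← e3]; exact u34)
        obtain ⟨-, -, ha, -, hqp, hqnp⟩ := fact t0 ht0
        set a := t0.2.1 with hadef
        have hG4 : G.card ≤ ({a, -a} ×ˢ ({a, -a} : Finset E3)).card := by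
          apply Finset.card_le_card_of_injOn (fun t => (t.2.1, t.2.2.2))
          · intro t ht
            obtain ⟨e1, e3, hx, hy, -, -⟩ := fact t ht
            have r2 := pair_lemma' (u := p) (v := q)
              (by have := fact t0 ht0; rw [← this.1]; exact hP _ (key t0 (Finset.mem_filter.mp (Finset.mem_filter.mp ht0).1).1).1)
              (by have := fact t0 ht0; rw [← this.2.1]; exact hP _ (key t0 (Finset.mem_filter.mp (Finset.mem_filter.mp ht0).1).1).2.2.1)
              hqp hqnp ha.1 ha.2.1 ha.2.2 hx.1 hx.2.1 hx.2.2
            have r4 := pair_lemma' (u := p) (v := q)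
              (by have := fact t0 ht0; rw [← this.1]; exact hP _ (key t0 (Finset.mem_filter.mp (Finset.mem_filter.mp ht0).1).1).1)
              (by have := fact t0 ht0; rw [← this.2.1]; exact hP _ (key t0 (Finset.mem_filter.mp (Finset.mem_filter.mp ht0).1).1).2.2.1)
              hqp hqnp ha.1 ha.2.1 ha.2.2 hy.1 hy.2.1 hy.2.2
            simp only [Finset.mem_coe, Finset.mem_product, Finset.mem_insert, Finset.mem_singleton]
            exact ⟨r2, r4⟩
          · intro t ht t' ht' h
            obtain ⟨e1, e3, -, -, -, -⟩ := fact t ht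
            obtain ⟨e1', e3', -, -, -, -⟩ := fact t' ht'
            obtain ⟨g2, g4⟩ := Prod.ext_iff.mp h
            simp only at g2 g4
            exact Prod.ext (e1.trans e1'.symm) (Prod.ext g2 (Prod.ext (e3.trans e3'.symm) g4))
        calc G.card ≤ ({a, -a} ×ˢ ({a, -a} : Finset E3)).card := hG4
          _ ≤ 4 := by
              rw [Finset.card_product]
              have : ({a, -a} : Finset E3).card ≤ 2 :=
                le_trans (Finset.card_insert_le _ _) (by simp)
              nlinarith [this]
    simpa [Finset.card_product, hn, sq] using this
  -- F2 bound
  have h2 : F2.card ≤ 2 * n ^ 2 := by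
    have : F2.card ≤ 2 * (P ×ˢ P).card := by
      apply Finset.card_le_mul_card_image_of_maps_to (f := fun t => (t.2.1, t.2.2.2))
      · intro t ht
        have hp := key t (Finset.mem_filter.mp ht).1
        exact Finset.mem_product.mpr ⟨hp.2.1, hp.2.2.2.1⟩
      · rintro ⟨x, y⟩ -
        set G := F2.filter (fun t => (t.2.1, t.2.2.2) = (x, y)) with hG
        rcases Finset.eq_empty_or_nonempty G with he | ⟨t0, ht0⟩
        · simp [he]
        have fact : ∀ t ∈ G, t.2.1 = x ∧ t.2.2.2 = y ∧
            (‖t.1‖ = 1 / Real.sqrt 2 ∧ ⟪x, t.1⟫ = 0 ∧ ⟪y, t.1⟫ = 0) ∧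
            (‖x‖ = 1 / Real.sqrt 2 ∧ ‖y‖ = 1 / Real.sqrt 2) ∧
            y ≠ x ∧ y ≠ -x := by
          intro t ht
          obtain ⟨ht1, heq⟩ := Finset.mem_filter.mp ht
          obtain ⟨htF, hc1, hc2⟩ := Finset.mem_filter.mp ht1
          obtain ⟨m1, m2, m3, m4, d12, d13, d14, d23, d24, d34, u12, u23, u34, u41⟩ := key t htF
          obtain ⟨e2, e4⟩ := Prod.ext_iff.mp heq
          simp only at e2 e4
          have n1 := hP _ m1; have n2 := hP _ m2; have n4 := hP _ m4
          rw [e2] at n2; rw [e4] at n4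
          refine ⟨e2, e4, ⟨n1, ?_, ?_⟩, ⟨n2, n4⟩, by rw [← e2, ← e4]; exact d24.symm,
            by rw [← e2, ← e4]; exact hc2⟩
          · rw [real_inner_comm]
            exact (dist_iff_inner' n1 n2).mp (by rw [← e2]; exact u12)
          · exact (dist_iff_inner' n4 n1).mp (by rw [← e4]; exact u41)
        obtain ⟨-, -, ha, ⟨nx, ny⟩, hyx, hynx⟩ := fact t0 ht0
        set a := t0.1 with hadef
        have hG2 : G.card ≤ ({a, -a} : Finset E3).card := by
          apply Finset.card_le_card_of_injOn (fun t => t.1)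
          · intro t ht
            obtain ⟨e2, e4, hx, -, -, -⟩ := fact t ht
            have r1 := pair_lemma' (u := x) (v := y) nx ny hyx hynx
              ha.1 ha.2.1 ha.2.2 hx.1 hx.2.1 hx.2.2
            simp only [Finset.mem_coe, Finset.mem_insert, Finset.mem_singleton]
            exact r1
          · intro t ht t' ht' h
            simp only at h
            obtain ⟨e2, e4, -, -, -, -⟩ := fact t ht
            obtain ⟨e2', e4', -, -, -, -⟩ := fact t' ht'
            have hc1 : t.2.2.1 = -t.1 := (Finset.mem_filter.mp (Finset.mem_filter.mp ht).1).2.1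
            have hc1' : t'.2.2.1 = -t'.1 := (Finset.mem_filter.mp (Finset.mem_filter.mp ht').1).2.1
            refine Prod.ext h (Prod.ext (e2.trans e2'.symm) (Prod.ext ?_ (e4.trans e4'.symm)))
            rw [hc1, hc1', h]
        calc G.card ≤ ({a, -a} : Finset E3).card := hG2
          _ ≤ 2 := le_trans (Finset.card_insert_le _ _) (by simp)
    simpa [Finset.card_product, hn, sq] using this
  have htot : F.card ≤ 7 * n ^ 2 := by omega
  calc (F.card : ℝ) ≤ ((7 * n ^ 2 : ℕ) : ℝ) := by exact_mod_cast htot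
    _ = 7 * (n : ℝ) ^ 2 := by push_cast; ring
end

section
/- Let G be a 3-regular graph on k vertices and let P₁, …, P_k be finite subsets of ℝ³ such that for every edge (i, j) of G, every point of P_i is at distance exactly 1 from every point of P_j. Then |P_i| ≤ 2 for at least k/2 of the indices i. Consequently, the number of k-tuples (p₁, …, p_k) with p_i ∈ P_i is at most 2^{k/2} · n^{k/2} when each |P_i| ≤ n. -/
open Finset

local notation "E3" => EuclideanSpace ℝ (Fin 3)

/-- Three distinct points on a line cannot be equidistant from a point. -/
lemma quadA {E : Type*} [NormedAddCommGroup E] [InnerProductSpace ℝ E]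
    (a p w : E) (t₁ t₂ t₃ : ℝ) (hw : w ≠ 0) (h12 : t₁ ≠ t₂) (h13 : t₁ ≠ t₃) (h23 : t₂ ≠ t₃)
    (e₁ : ‖p + t₁ • w - a‖ = 1) (e₂ : ‖p + t₂ • w - a‖ = 1) (e₃ : ‖p + t₃ • w - a‖ = 1) :
    False := by
  have hsq : ∀ t : ℝ, ‖p + t • w - a‖ = 1 →
      ‖p - a‖ ^ 2 + 2 * (t * inner ℝ (p - a) w) + t ^ 2 * ‖w‖ ^ 2 = 1 := by
    intro t ht
    have h1 : p + t • w - a = (p - a) + t • w := by abel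
    have h2 : ‖(p - a) + t • w‖ ^ 2 = 1 := by rw [← h1, ht]; norm_num
    rw [norm_add_sq_real, inner_smul_right, norm_smul] at h2
    rw [← h2]
    simp [mul_pow, sq_abs]
  have E1 := hsq t₁ e₁
  have E2 := hsq t₂ e₂
  have E3' := hsq t₃ e₃
  set A := (inner ℝ (p - a) w : ℝ)
  set B := ‖w‖ ^ 2 with hB
  have hBpos : 0 < B := by
    have := norm_pos_iff.2 hw
    positivity
  have h1 : (t₁ - t₂) * (2 * A + (t₁ + t₂) * B) = 0 := by ring_nf; nlinarith [E1, E2]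
  have h2 : (t₁ - t₃) * (2 * A + (t₁ + t₃) * B) = 0 := by ring_nf; nlinarith [E1, E3']
  have g1 : 2 * A + (t₁ + t₂) * B = 0 :=
    (mul_eq_zero.1 h1).resolve_left (sub_ne_zero.2 h12)
  have g2 : 2 * A + (t₁ + t₃) * B = 0 :=
    (mul_eq_zero.1 h2).resolve_left (sub_ne_zero.2 h13)
  have : (t₂ - t₃) * B = 0 := by linarith [g1, g2]
  rcases mul_eq_zero.1 this with h | h
  · exact h23 (by linarith [sub_eq_zero.1 h])
  · linarith

/-- If p and q are both at distance 1 from a and from b, then q - p ⊥ b - a. -/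
lemma orthA {E : Type*} [NormedAddCommGroup E] [InnerProductSpace ℝ E]
    (a b p q : E) (hpa : ‖p - a‖ = 1) (hpb : ‖p - b‖ = 1)
    (hqa : ‖q - a‖ = 1) (hqb : ‖q - b‖ = 1) :
    (inner ℝ (q - p) (b - a) : ℝ) = 0 := by
  have e1 : ‖p - a‖ ^ 2 = 1 := by rw [hpa]; norm_num
  have e2 : ‖p - b‖ ^ 2 = 1 := by rw [hpb]; norm_num
  have e3 : ‖q - a‖ ^ 2 = 1 := by rw [hqa]; norm_num
  have e4 : ‖q - b‖ ^ 2 = 1 := by rw [hqb]; norm_num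
  rw [norm_sub_sq_real] at e1 e2 e3 e4
  simp only [inner_sub_left, inner_sub_right]
  linarith

/-- The key geometric fact: in ℝ³ two finite sets with all cross distances 1
cannot both have at least 3 points. -/
lemma keyGeom (A B : Finset E3) (h : ∀ a ∈ A, ∀ b ∈ B, dist a b = 1)
    (hA : 3 ≤ A.card) (hB : 3 ≤ B.card) : False := by
  obtain ⟨a, b, c, ha, hb, hc, hab, hac, hbc⟩ := Finset.two_lt_card_iff.1 (by omega : 2 < A.card)
  obtain ⟨p, q, r, hp, hq, hr, hpq, hpr, hqr⟩ := Finset.two_lt_card_iff.1 (by omega : 2 < B.card)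
  have hd : ∀ x ∈ A, ∀ y ∈ B, ‖x - y‖ = 1 := fun x hx y hy => by
    rw [← dist_eq_norm]; exact h x hx y hy
  have hd' : ∀ y ∈ B, ∀ x ∈ A, ‖y - x‖ = 1 := fun y hy x hx => by
    rw [norm_sub_rev]; exact hd x hx y hy
  set u := b - a with hu
  have hu0 : u ≠ 0 := sub_ne_zero.2 (Ne.symm hab)
  by_cases hdep : ∃ t : ℝ, c - a = t • u
  · -- a, b, c collinear: a, b, c are 3 distinct points on a line, all at distance 1 from p
    obtain ⟨t, ht⟩ := hdep
    have ht0 : t ≠ 0 := by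
      intro h0; rw [h0, zero_smul] at ht
      exact hac (sub_eq_zero.1 ht).symm
    have ht1 : t ≠ 1 := by
      intro h1; rw [h1, one_smul] at ht
      exact hbc (sub_left_injective ht).symm
    exact quadA p a u 0 1 t hu0 (by norm_num) (Ne.symm ht0) (Ne.symm ht1)
      (by simpa using hd a ha p hp)
      (by rw [one_smul]; have : a + u - p = b - p := by rw [hu]; abel
          rw [this]; exact hd b hb p hp)
      (by rw [← ht]; have : a + (c - a) - p = c - p := by abel
          rw [this]; exact hd c hc p hp)
  · -- a, b, c not collinear
    have hv0 : (c - a) ≠ 0 := sub_ne_zero.2 (Ne.symm hac)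
    set v := c - a with hv
    have hli : LinearIndependent ℝ ![u, v] := by
      rw [LinearIndependent.pair_iff' hu0]
      intro s hs
      exact hdep ⟨s, hs.symm⟩
    set W : Submodule ℝ E3 := Submodule.span ℝ {u, v} with hW
    have hWrank : Module.finrank ℝ W = 2 := by
      have hr : W = Submodule.span ℝ (Set.range ![u, v]) := by
        rw [hW]; congr 1; simp [Matrix.range_cons, Matrix.range_empty]
        ext x; simp [or_comm]
      rw [hr, finrank_span_eq_card hli]
      simp
    have hperp : ∀ y ∈ B, ∀ z ∈ B, y - z ∈ Wᗮ := by
      intro y hy z hz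
      rw [Submodule.mem_orthogonal]
      intro x hx
      obtain ⟨s, t, hst⟩ := Submodule.mem_span_pair.1 hx
      rw [← hst, inner_add_left, inner_smul_left, inner_smul_left]
      have o1 : (inner ℝ (y - z) u : ℝ) = 0 :=
        orthA a b z y (hd' z hz a ha) (hd' z hz b hb) (hd' y hy a ha) (hd' y hy b hb)
      have o2 : (inner ℝ (y - z) v : ℝ) = 0 :=
        orthA a c z y (hd' z hz a ha) (hd' z hz c hc) (hd' y hy a ha) (hd' y hy c hc)
      have o1' : (inner ℝ u (y - z) : ℝ) = 0 := by rw [real_inner_comm]; exact o1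
      have o2' : (inner ℝ v (y - z) : ℝ) = 0 := by rw [real_inner_comm]; exact o2
      rw [o1', o2']; simp
    have hfin : Module.finrank ℝ (Wᗮ : Submodule ℝ E3) = 1 := by
      have := Submodule.finrank_add_finrank_orthogonal W
      rw [hWrank] at this
      have h3 : Module.finrank ℝ E3 = 3 := by simp
      omega
    set w₁ := q - p with hw₁
    have hw₁0 : w₁ ≠ 0 := sub_ne_zero.2 (Ne.symm hpq)
    have hspan : Submodule.span ℝ {w₁} = Wᗮ := by
      apply Submodule.eq_of_le_of_finrank_le
      · rw [Submodule.span_singleton_le_iff_mem]; exact hperp q hq p hp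
      · rw [hfin, finrank_span_singleton hw₁0]
    have hmem : r - p ∈ Submodule.span ℝ ({w₁} : Set E3) := by
      rw [hspan]; exact hperp r hr p hp
    obtain ⟨s, hs⟩ := Submodule.mem_span_singleton.1 hmem
    have hs0 : s ≠ 0 := by
      intro h0; rw [h0, zero_smul] at hs
      exact hpr (sub_eq_zero.1 hs.symm).symm
    have hs1 : s ≠ 1 := by
      intro h1; rw [h1, one_smul, hw₁] at hs
      exact hqr (sub_left_injective hs)
    exact quadA a p w₁ 0 1 s hw₁0 (by norm_num) (Ne.symm hs0) (Ne.symm hs1)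
      (by simpa using hd' p hp a ha)
      (by rw [one_smul]; have : p + w₁ - a = q - a := by rw [hw₁]; abel
          rw [this]; exact hd' q hq a ha)
      (by rw [hs]; have : p + (r - p) - a = r - a := by abel
          rw [this]; exact hd' r hr a ha)

theorem cubic_graph_full_type_bound
    (k n : ℕ) (G : SimpleGraph (Fin k)) [DecidableRel G.Adj]
    (hreg : G.IsRegularOfDegree 3)
    (P : Fin k → Finset (EuclideanSpace ℝ (Fin 3)))
    (hdist : ∀ i j : Fin k, G.Adj i j →
      ∀ p ∈ P i, ∀ q ∈ P j, dist p q = 1)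
    (hsize : ∀ i, (P i).card ≤ n) :
    k / 2 ≤ (Finset.univ.filter fun i : Fin k => (P i).card ≤ 2).card ∧
    (∏ i : Fin k, (P i).card) ≤ 2 ^ (k / 2) * n ^ (k / 2) := by
  classical
  -- k is even
  have hkeven : k % 2 = 0 := by
    have h2 := G.sum_degrees_eq_twice_card_edges
    have h3 : ∑ v : Fin k, G.degree v = k * 3 := by
      rw [Finset.sum_congr rfl (fun v _ => hreg v)]
      simp [Finset.card_univ, mul_comm]
    omega
  set Small := Finset.univ.filter (fun i : Fin k => (P i).card ≤ 2) with hSmall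
  set Big := Finset.univ.filter (fun i : Fin k => 2 < (P i).card) with hBig
  have hsplit : Small.card + Big.card = k := by
    rw [hSmall, hBig]
    have := Finset.card_filter_add_card_filter_not
      (s := (Finset.univ : Finset (Fin k))) (p := fun i => (P i).card ≤ 2)
    simp only [not_le, Finset.card_univ, Fintype.card_fin] at this
    exact this
  -- neighbors of big vertices are small
  have hadjsmall : ∀ i ∈ Big, ∀ j : Fin k, G.Adj i j → j ∈ Small := by
    intro i hi j hadj
    rw [hBig, Finset.mem_filter] at hi
    rw [hSmall, Finset.mem_filter]
    refine ⟨Finset.mem_univ _, ?_⟩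
    by_contra hj
    push_neg at hj
    exact keyGeom (P i) (P j) (hdist i j hadj) (by omega) (by omega)
  -- counting: 3 * Big.card ≤ 3 * Small.card
  have hdeg : ∀ i : Fin k, (Finset.univ.filter (G.Adj i)).card = 3 := by
    intro i
    rw [← SimpleGraph.neighborFinset_eq_filter]
    exact hreg i
  have hcount : Big.card ≤ Small.card := by
    have hS1 : ∑ i ∈ Big, ∑ j : Fin k, (if G.Adj i j then 1 else 0) = 3 * Big.card := by
      have hrow : ∀ i : Fin k, ∑ j : Fin k, (if G.Adj i j then 1 else 0) = 3 := by
        intro i; rw [← Finset.card_filter]; exact hdeg i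
      rw [Finset.sum_congr rfl (fun i _ => hrow i), Finset.sum_const, smul_eq_mul, mul_comm]
    have hS2 : ∑ i ∈ Big, ∑ j : Fin k, (if G.Adj i j then 1 else 0)
        = ∑ j : Fin k, ∑ i ∈ Big, (if G.Adj i j then 1 else 0) := Finset.sum_comm
    have hS3 : ∀ j : Fin k, (∑ i ∈ Big, (if G.Adj i j then 1 else 0))
        ≤ (if j ∈ Small then 3 else 0) := by
      intro j
      by_cases hj : j ∈ Small
      · rw [if_pos hj]
        calc ∑ i ∈ Big, (if G.Adj i j then 1 else 0)
            ≤ ∑ i : Fin k, (if G.Adj i j then 1 else 0) :=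
              Finset.sum_le_sum_of_subset (Finset.subset_univ Big)
          _ = (Finset.univ.filter (G.Adj · j)).card := (Finset.card_filter _ _).symm
          _ = 3 := by
              have : (Finset.univ.filter (G.Adj · j)) = Finset.univ.filter (G.Adj j) := by
                apply Finset.filter_congr
                intro x _
                simp [SimpleGraph.adj_comm]
              rw [this]; exact hdeg j
      · rw [if_neg hj]
        apply le_of_eq
        apply Finset.sum_eq_zero
        intro i hi
        rw [if_neg]
        intro hadj
        exact hj (hadjsmall i hi j hadj)
    have hS4 : ∑ j : Fin k, (if j ∈ Small then 3 else 0) = 3 * Small.card := by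
      rw [Finset.sum_ite_mem]
      simp [Finset.univ_inter, mul_comm]
    have := hS1 ▸ hS2 ▸ (Finset.sum_le_sum (fun j _ => hS3 j))
    omega
  have hhalf : k / 2 ≤ Small.card := by omega
  refine ⟨hhalf, ?_⟩
  -- product bound
  have hBigle : Big.card ≤ k / 2 := by omega
  obtain ⟨B', hB'sub, hB'card⟩ := Finset.exists_superset_card_eq hBigle
    (by simp [Fintype.card_fin]; omega)
  have hprodsplit : (∏ i ∈ B', (P i).card) * (∏ i ∈ B'ᶜ, (P i).card)
      = ∏ i : Fin k, (P i).card := Finset.prod_mul_prod_compl B' _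
  have h1 : ∏ i ∈ B', (P i).card ≤ n ^ (k / 2) := by
    rw [← hB'card]
    exact Finset.prod_le_pow_card B' _ n (fun i _ => hsize i)
  have h2 : ∏ i ∈ B'ᶜ, (P i).card ≤ 2 ^ (k / 2) := by
    have hc : B'ᶜ.card = k / 2 := by
      rw [Finset.card_compl, hB'card]
      simp [Fintype.card_fin]
      omega
    rw [← hc]
    apply Finset.prod_le_pow_card
    intro i hi
    by_contra hgt
    push_neg at hgt
    have : i ∈ Big := by rw [hBig, Finset.mem_filter]; exact ⟨Finset.mem_univ _, hgt⟩
    exact (Finset.mem_compl.1 hi) (hB'sub this)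
  calc ∏ i : Fin k, (P i).card = (∏ i ∈ B', (P i).card) * (∏ i ∈ B'ᶜ, (P i).card) :=
        hprodsplit.symm
    _ ≤ n ^ (k / 2) * 2 ^ (k / 2) := Nat.mul_le_mul h1 h2
    _ = 2 ^ (k / 2) * n ^ (k / 2) := mul_comm _ _
end

section
/- Let G be a 3-regular bipartite graph on k vertices with parts of size k/2 each, and let r, d > 0 satisfy r² + d² between appropriate values so that the construction works: place k/2 distinct points on a line ℓ and n − k/2 points on a circle C of radius r centered at a point of ℓ in a plane orthogonal to ℓ, such that each line point is at the same distance from every circle point. Then the number of embeddings of G (with prescribed edge lengths equal to these distances) into this n-point set is at least c · n^{k/2} for a constant c > 0 depending only on k. -/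
noncomputable section BipartiteCubicAux

/-- A point of `ℝ³` given by coordinates. -/
def pt (x y z : ℝ) : EuclideanSpace ℝ (Fin 3) :=
  (WithLp.equiv 2 (Fin 3 → ℝ)).symm ![x, y, z]

lemma pt_zero : (0 : EuclideanSpace ℝ (Fin 3)) = pt 0 0 0 := by
  ext i; fin_cases i <;> rfl

lemma pt_smul (t x y z : ℝ) : t • pt x y z = pt (t*x) (t*y) (t*z) := by
  ext i; fin_cases i <;> rfl

lemma pt_add (x y z x' y' z' : ℝ) : pt x y z + pt x' y' z' = pt (x+x') (y+y') (z+z') := by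
  ext i; fin_cases i <;> rfl

lemma pt_sub (x y z x' y' z' : ℝ) : pt x y z - pt x' y' z' = pt (x-x') (y-y') (z-z') := by
  ext i; fin_cases i <;> rfl

lemma dist_pt (x y z x' y' z' : ℝ) :
    dist (pt x y z) (pt x' y' z') = Real.sqrt ((x-x')^2 + (y-y')^2 + (z-z')^2) := by
  rw [EuclideanSpace.dist_eq]
  congr 1
  rw [Fin.sum_univ_three]
  simp [pt, Real.dist_eq, sq_abs]

lemma inner_pt (x y z x' y' z' : ℝ) :
    (inner ℝ (pt x y z) (pt x' y' z') : ℝ) = x*x' + y*y' + z*z' := by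
  rw [PiLp.inner_apply, Fin.sum_univ_three]
  simp [pt]
  ring

def linePt (m : ℕ) : EuclideanSpace ℝ (Fin 3) := pt (m+1) 0 0
def circlePt (j : ℕ) : EuclideanSpace ℝ (Fin 3) :=
  pt 0 ((1 - (j:ℝ)^2)/(1 + (j:ℝ)^2)) (2*(j:ℝ)/(1 + (j:ℝ)^2))

lemma circlePt_sq (j : ℕ) :
    ((1 - (j:ℝ)^2)/(1 + (j:ℝ)^2))^2 + (2*(j:ℝ)/(1 + (j:ℝ)^2))^2 = 1 := by
  have h : (1:ℝ) + (j:ℝ)^2 ≠ 0 := by positivity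
  field_simp
  ring

lemma linePt_inj : Function.Injective linePt := by
  intro m m' h
  have h0 : ((m:ℝ)+1) = ((m':ℝ)+1) := congrArg (fun v => v 0) h
  have : (m:ℝ) = m' := by linarith
  exact_mod_cast this

lemma circlePt_inj : Function.Injective circlePt := by
  intro j j' h
  have h1 : (1 - (j:ℝ)^2)/(1 + (j:ℝ)^2) = (1 - (j':ℝ)^2)/(1 + (j':ℝ)^2) := congrArg (fun v => v 1) h
  have hj : (1:ℝ) + (j:ℝ)^2 ≠ 0 := by positivity
  have hj' : (1:ℝ) + (j':ℝ)^2 ≠ 0 := by positivity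
  have h2 : (j:ℝ)^2 = (j':ℝ)^2 := by
    field_simp at h1
    nlinarith [h1]
  have : (j:ℕ)^2 = (j':ℕ)^2 := by exact_mod_cast h2
  exact Nat.pow_left_injective (by norm_num) this

lemma linePt_ne_circlePt (m j : ℕ) : linePt m ≠ circlePt j := by
  intro h
  have h0 : ((m:ℝ)+1) = 0 := congrArg (fun v => v 0) h
  have hm : (0:ℝ) < (m:ℝ)+1 := by positivity
  rw [h0] at hm
  exact lt_irrefl _ hm

lemma dist_line_circle (m j : ℕ) :
    dist (linePt m) (circlePt j) = Real.sqrt (((m:ℝ)+1)^2 + 1) := by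
  rw [linePt, circlePt, dist_pt]
  congr 1
  have := circlePt_sq j
  nlinarith [this]

lemma dist_circle_zero (j : ℕ) : dist (circlePt j) (0 : EuclideanSpace ℝ (Fin 3)) = 1 := by
  rw [circlePt, pt_zero, dist_pt]
  have := circlePt_sq j
  rw [show ((0:ℝ)-0)^2 + (((1 - (j:ℝ)^2)/(1 + (j:ℝ)^2))-0)^2 + ((2*(j:ℝ)/(1 + (j:ℝ)^2))-0)^2
      = 1 by nlinarith [this]]
  exact Real.sqrt_one

section lc
variable {k n : ℕ} (A : Finset (Fin k)) (hA : A.card = k / 2) (hB : Aᶜ.card = k - k / 2)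

def lcMap (σ : Fin (k - k/2) ↪ Fin (n - k/2)) : Fin k → EuclideanSpace ℝ (Fin 3) :=
  fun i =>
    if h : i ∈ A then linePt (((A.orderIsoOfFin hA).symm ⟨i, h⟩ : Fin (k/2)) : ℕ)
    else circlePt ((σ ((Aᶜ.orderIsoOfFin hB).symm ⟨i, Finset.mem_compl.2 h⟩) : Fin (n - k/2)) : ℕ)

lemma lcMap_pos (σ : Fin (k - k/2) ↪ Fin (n - k/2)) {i : Fin k} (h : i ∈ A) :
    lcMap A hA hB σ i = linePt (((A.orderIsoOfFin hA).symm ⟨i, h⟩ : Fin (k/2)) : ℕ) :=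
  dif_pos h

lemma lcMap_neg (σ : Fin (k - k/2) ↪ Fin (n - k/2)) {i : Fin k} (h : i ∉ A) :
    lcMap A hA hB σ i
      = circlePt ((σ ((Aᶜ.orderIsoOfFin hB).symm ⟨i, Finset.mem_compl.2 h⟩) : Fin (n - k/2)) : ℕ) :=
  dif_neg h

lemma lcMap_inj (σ : Fin (k - k/2) ↪ Fin (n - k/2)) :
    Function.Injective (lcMap A hA hB σ) := by
  intro i j hij
  by_cases hi : i ∈ A <;> by_cases hj : j ∈ A
  · rw [lcMap_pos A hA hB σ hi, lcMap_pos A hA hB σ hj] at hij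
    have h4 := Fin.val_injective (linePt_inj hij)
    have h5 := (A.orderIsoOfFin hA).symm.injective h4
    exact congrArg Subtype.val h5
  · rw [lcMap_pos A hA hB σ hi, lcMap_neg A hA hB σ hj] at hij
    exact absurd hij (linePt_ne_circlePt _ _)
  · rw [lcMap_neg A hA hB σ hi, lcMap_pos A hA hB σ hj] at hij
    exact absurd hij.symm (linePt_ne_circlePt _ _)
  · rw [lcMap_neg A hA hB σ hi, lcMap_neg A hA hB σ hj] at hij
    have h4 := σ.injective (Fin.val_injective (circlePt_inj hij))
    have h5 := (Aᶜ.orderIsoOfFin hB).symm.injective h4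
    exact congrArg Subtype.val h5

lemma lcMap_map_inj : Function.Injective (lcMap (n := n) A hA hB) := by
  intro σ σ' h
  ext x
  set u := (Aᶜ.orderIsoOfFin hB) x with hu
  have hx : (u : Fin k) ∉ A := Finset.mem_compl.1 u.2
  have h1 := congrFun h (u : Fin k)
  rw [lcMap_neg A hA hB σ hx, lcMap_neg A hA hB σ' hx] at h1
  have h3 : (Aᶜ.orderIsoOfFin hB).symm ⟨(u : Fin k), Finset.mem_compl.2 hx⟩ = x := by
    rw [show (⟨(u : Fin k), Finset.mem_compl.2 hx⟩ : {y // y ∈ Aᶜ}) = u from Subtype.ext rfl]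
    exact (Aᶜ.orderIsoOfFin hB).symm_apply_apply x
  rw [h3] at h1
  exact circlePt_inj h1

lemma lcMap_dist (σ σ' : Fin (k - k/2) ↪ Fin (n - k/2)) {i j : Fin k}
    (hij : i ∈ A ↔ j ∉ A) :
    dist (lcMap A hA hB σ i) (lcMap A hA hB σ j)
      = dist (lcMap A hA hB σ' i) (lcMap A hA hB σ' j) := by
  by_cases hi : i ∈ A
  · have hj : j ∉ A := hij.1 hi
    rw [lcMap_pos A hA hB σ hi, lcMap_pos A hA hB σ' hi,
      lcMap_neg A hA hB σ hj, lcMap_neg A hA hB σ' hj,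
      dist_line_circle, dist_line_circle]
  · have hj : j ∈ A := by by_contra hj; exact hi (hij.2 hj)
    rw [lcMap_neg A hA hB σ hi, lcMap_neg A hA hB σ' hi,
      lcMap_pos A hA hB σ hj, lcMap_pos A hA hB σ' hj,
      dist_comm, dist_comm (circlePt _), dist_line_circle, dist_line_circle]

end lc

lemma desc_lb : ∀ (b m : ℕ), b ≤ m → (m - b + 1)^b ≤ m.descFactorial b := by
  intro b
  induction b with
  | zero => simp
  | succ b ih =>
    intro m h
    rw [Nat.descFactorial_succ]
    have e : m - (b+1) + 1 = m - b := by omega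
    rw [e, pow_succ]
    have h1 : (m - b)^b ≤ (m - b + 1)^b := Nat.pow_le_pow_left (by omega) b
    calc (m-b)^b * (m-b) ≤ (m-b+1)^b * (m-b) := Nat.mul_le_mul_right _ h1
      _ ≤ m.descFactorial b * (m - b) := Nat.mul_le_mul_right _ (ih m (by omega))
      _ = (m - b) * m.descFactorial b := Nat.mul_comm _ _

end BipartiteCubicAux

theorem bipartite_cubic_prescribed_lengths_lower_bound
    (k : ℕ) (G : SimpleGraph (Fin k)) [DecidableRel G.Adj] (hreg : G.IsRegularOfDegree 3)
    (A : Finset (Fin k)) (hA : A.card = k / 2)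
    (hbip : ∀ i j : Fin k, G.Adj i j → (i ∈ A ↔ j ∉ A)) :
    ∃ c : ℝ, 0 < c ∧ ∀ n : ℕ, k ≤ n →
      ∃ (P : Finset (EuclideanSpace ℝ (Fin 3)))
        (w : Fin k → Fin k → ℝ),
        P.card = n ∧
        -- the configuration: k/2 points on a line ℓ, the rest on a circle
        -- centered at a point of ℓ in a plane orthogonal to ℓ, with each
        -- line point equidistant from all circle points
        (∃ (p v : EuclideanSpace ℝ (Fin 3)), v ≠ 0 ∧
          ∃ L C : Finset (EuclideanSpace ℝ (Fin 3)),
            Disjoint L C ∧ (∀ x, x ∈ P ↔ x ∈ L ∨ x ∈ C) ∧ L.card = k / 2 ∧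
            (∀ x ∈ L, ∃ t : ℝ, x = p + t • v) ∧
            (∃ (c₀ : EuclideanSpace ℝ (Fin 3)) (r : ℝ), 0 < r ∧
              (∃ t : ℝ, c₀ = p + t • v) ∧
              ∀ x ∈ C, inner ℝ (x - c₀) v = (0 : ℝ) ∧ dist x c₀ = r) ∧
            (∀ x ∈ L, ∃ d : ℝ, ∀ y ∈ C, dist x y = d)) ∧
        c * (n : ℝ) ^ (k / 2) ≤
          ({f : Fin k → EuclideanSpace ℝ (Fin 3) |
            Function.Injective f ∧ (∀ i, f i ∈ P) ∧
            ∀ i j : Fin k, G.Adj i j → dist (f i) (f j) = w i j}.ncard : ℝ) := by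
  classical
  refine ⟨((k:ℝ)+1)⁻¹ ^ (k/2), by positivity, fun n hn => ?_⟩
  have hB : Aᶜ.card = k - k / 2 := by
    rw [Finset.card_compl, hA, Fintype.card_fin]
  set L : Finset (EuclideanSpace ℝ (Fin 3)) := (Finset.range (k/2)).image linePt with hLdef
  set C : Finset (EuclideanSpace ℝ (Fin 3)) := (Finset.range (n - k/2)).image circlePt with hCdef
  have hLC : Disjoint L C := by
    rw [Finset.disjoint_left]
    rintro x hxL hxC
    obtain ⟨m, -, rfl⟩ := Finset.mem_image.1 hxL
    obtain ⟨j, -, hj⟩ := Finset.mem_image.1 hxC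
    exact linePt_ne_circlePt m j hj.symm
  refine ⟨L ∪ C, ?_⟩
  have hble : k - k/2 ≤ n - k/2 := by omega
  set σ₀ : Fin (k - k/2) ↪ Fin (n - k/2) := Fin.castLEEmb hble with hσ₀
  refine ⟨fun i j => dist (lcMap A hA hB σ₀ i) (lcMap A hA hB σ₀ j), ?_, ?_, ?_⟩
  · -- cardinality of P
    rw [Finset.card_union_of_disjoint hLC,
      Finset.card_image_of_injective _ linePt_inj,
      Finset.card_image_of_injective _ circlePt_inj,
      Finset.card_range, Finset.card_range]
    omega
  · -- configuration
    refine ⟨0, pt 1 0 0, ?_, L, C, hLC, fun x => Finset.mem_union, ?_, ?_, ?_, ?_⟩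
    · intro h
      have h0 := congrArg (fun v => v 0) h
      simp [pt] at h0
    · rw [Finset.card_image_of_injective _ linePt_inj, Finset.card_range]
    · rintro x hx
      obtain ⟨m, -, rfl⟩ := Finset.mem_image.1 hx
      exact ⟨(m:ℝ)+1, by rw [pt_smul, zero_add]; simp [linePt]⟩
    · refine ⟨0, 1, one_pos, ⟨0, by rw [pt_smul, zero_add]; simp [pt_zero]⟩, ?_⟩
      rintro x hx
      obtain ⟨j, -, rfl⟩ := Finset.mem_image.1 hx
      constructor
      · rw [sub_zero, circlePt, inner_pt]
        ring
      · exact dist_circle_zero j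
    · rintro x hx
      obtain ⟨m, -, rfl⟩ := Finset.mem_image.1 hx
      refine ⟨Real.sqrt (((m:ℝ)+1)^2 + 1), ?_⟩
      rintro y hy
      obtain ⟨j, -, rfl⟩ := Finset.mem_image.1 hy
      exact dist_line_circle m j
  · -- the counting
    set S := {f : Fin k → EuclideanSpace ℝ (Fin 3) |
        Function.Injective f ∧ (∀ i, f i ∈ L ∪ C) ∧
        ∀ i j : Fin k, G.Adj i j →
          dist (f i) (f j) = dist (lcMap A hA hB σ₀ i) (lcMap A hA hB σ₀ j)} with hS
    have hmem : ∀ (σ : Fin (k - k/2) ↪ Fin (n - k/2)) (i : Fin k),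
        lcMap A hA hB σ i ∈ L ∪ C := by
      intro σ i
      by_cases h : i ∈ A
      · rw [lcMap_pos A hA hB σ h]
        exact Finset.mem_union_left _
          (Finset.mem_image_of_mem _ (Finset.mem_range.2 (Fin.is_lt _)))
      · rw [lcMap_neg A hA hB σ h]
        exact Finset.mem_union_right _
          (Finset.mem_image_of_mem _ (Finset.mem_range.2 (Fin.is_lt _)))
    have hmemS : ∀ σ : Fin (k - k/2) ↪ Fin (n - k/2), lcMap A hA hB σ ∈ S := by
      intro σ
      exact ⟨lcMap_inj A hA hB σ, hmem σ,
        fun i j hadj => lcMap_dist A hA hB σ σ₀ (hbip i j hadj)⟩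
    have hSfin : S.Finite := by
      have h1 : Set.Finite {f : Fin k → EuclideanSpace ℝ (Fin 3) | ∀ i, f i ∈ L ∪ C} := by
        have : {f : Fin k → EuclideanSpace ℝ (Fin 3) | ∀ i, f i ∈ L ∪ C}
            = Set.pi Set.univ (fun _ => ((L ∪ C : Finset _) : Set _)) := by
          ext f; simp [Set.mem_pi]
        rw [this]
        exact Set.Finite.pi fun _ => (L ∪ C).finite_toSet
      exact h1.subset fun f hf => hf.2.1
    have hcard : ((n - k/2).descFactorial (k - k/2)) ≤ S.ncard := by
      have := hSfin.to_subtype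
      have hinj : Function.Injective
          (fun σ : Fin (k - k/2) ↪ Fin (n - k/2) => (⟨lcMap A hA hB σ, hmemS σ⟩ : S)) :=
        fun σ σ' h => lcMap_map_inj A hA hB (congrArg Subtype.val h)
      have h2 := Nat.card_le_card_of_injective _ hinj
      rw [Nat.card_eq_fintype_card, Fintype.card_embedding_eq, Fintype.card_fin,
        Fintype.card_fin, Nat.card_coe_set_eq] at h2
      exact h2
    -- real inequality
    have hk1 : (0:ℝ) < (k:ℝ) + 1 := by positivity
    have hcast : ((n - k + 1 : ℕ) : ℝ) = (n:ℝ) - k + 1 := by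
      push_cast [Nat.cast_sub hn]
      ring
    have step2 : (n:ℝ)/((k:ℝ)+1) ≤ ((n - k + 1 : ℕ):ℝ) := by
      rw [hcast, div_le_iff₀ hk1]
      have hkn : (k:ℝ) ≤ n := by exact_mod_cast hn
      have hk0 : (0:ℝ) ≤ k := by positivity
      nlinarith
    calc ((k:ℝ)+1)⁻¹ ^ (k/2) * (n:ℝ) ^ (k/2)
        = ((n:ℝ)/((k:ℝ)+1)) ^ (k/2) := by
          rw [← mul_pow]; congr 1; rw [div_eq_mul_inv]; ring
      _ ≤ ((n - k + 1 : ℕ):ℝ) ^ (k/2) := by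
          apply pow_le_pow_left₀ (by positivity) step2
      _ ≤ ((n - k + 1 : ℕ):ℝ) ^ (k - k/2) := by
          apply pow_le_pow_right₀ ?_ (by omega)
          have : (1:ℕ) ≤ n - k + 1 := by omega
          exact_mod_cast this
      _ = (((n - k + 1)^(k - k/2) : ℕ) : ℝ) := by push_cast; ring
      _ ≤ (((n - k/2).descFactorial (k - k/2) : ℕ) : ℝ) := by
          have h3 : (n - k/2) - (k - k/2) + 1 = n - k + 1 := by omega
          have h4 := desc_lb (k - k/2) (n - k/2) (by omega)
          rw [h3] at h4
          exact_mod_cast h4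
      _ ≤ (S.ncard : ℝ) := by exact_mod_cast hcard
end
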